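/- Let λ_1 < λ_2 < ... < λ_n be real numbers with λ_{k+1} − λ_k ≥ δ > 0 for all k, and let c_1, ..., c_n ∈ ℂ. Then for T > 0, (1/T)∫_0^T |Σ_k c_k e^{iλ_k t}|² dt ≥ (1 − 2π/(Tδ)) Σ_k |c_k|². In particular, if T > 4π/δ, then (1/T)∫_0^T |Σ_k c_k e^{iλ_k t}|² dt ≥ (1/2) Σ_k |c_k|². -/

import Mathlib

open Complex Real Finset

-- a-matrix
noncomputable def MVa {n : ℕ} (lam : Fin n → ℝ) (r s : Fin n) : ℝ :=
  if r = s then 0 else 1 / (lam r - lam s)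

lemma MVa_antisymm {n : ℕ} (lam : Fin n → ℝ) (r s : Fin n) : MVa lam s r = - MVa lam r s := by
  unfold MVa
  rcases eq_or_ne r s with h | h
  · simp [h]
  · rw [if_neg h.symm, if_neg h, one_div, one_div, ← inv_neg, neg_sub]

lemma MVgap {n : ℕ} (lam : Fin n → ℝ) (δ : ℝ)
    (hsep : ∀ (i : ℕ) (h : i + 1 < n), lam ⟨i + 1, h⟩ - lam ⟨i, Nat.lt_of_succ_lt h⟩ ≥ δ) :
    ∀ (d r : ℕ) (h : r + d < n), lam ⟨r + d, h⟩ - lam ⟨r, by omega⟩ ≥ d * δ := by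
  intro d
  induction d with
  | zero => intro r h; simp
  | succ d ih =>
    intro r h
    have h1 : r + d < n := by omega
    have h2 := hsep (r + d) (by omega)
    have h3 := ih r h1
    have : lam ⟨r + (d+1), h⟩ = lam ⟨r + d + 1, by omega⟩ := by congr 1
    push_cast
    rw [this]
    nlinarith [h2, h3]

lemma MVgap' {n : ℕ} (lam : Fin n → ℝ) (δ : ℝ) (hδ : 0 < δ)
    (hsep : ∀ (i : ℕ) (h : i + 1 < n), lam ⟨i + 1, h⟩ - lam ⟨i, Nat.lt_of_succ_lt h⟩ ≥ δ)
    (r s : Fin n) (hne : r ≠ s) :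
    |lam r - lam s| ≥ ((r.val : ℤ) - s.val).natAbs * δ := by
  rcases lt_or_gt_of_ne (fun h : r.val = s.val => hne (Fin.ext h)) with h | h
  · -- r < s
    have h2 := MVgap lam δ hsep (s.val - r.val) r.val (by omega)
    have he : (⟨r.val + (s.val - r.val), by omega⟩ : Fin n) = s := by ext; simp; omega
    have he2 : (⟨r.val, by omega⟩ : Fin n) = r := by ext; simp
    rw [he, he2] at h2
    have hn : ((r.val : ℤ) - s.val).natAbs = s.val - r.val := by omega
    rw [hn]
    push_cast [Nat.cast_sub (le_of_lt h)] at h2 ⊢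
    have h4 : (1:ℝ) ≤ (s.val:ℝ) - r.val := by
      have : (1:ℤ) ≤ (s.val:ℤ) - r.val := by omega
      exact_mod_cast this
    rw [_root_.abs_of_nonpos (by nlinarith)]
    linarith
  · have h2 := MVgap lam δ hsep (r.val - s.val) s.val (by omega)
    have he : (⟨s.val + (r.val - s.val), by omega⟩ : Fin n) = r := by ext; simp; omega
    have he2 : (⟨s.val, by omega⟩ : Fin n) = s := by ext; simp
    rw [he, he2] at h2
    have hn : ((r.val : ℤ) - s.val).natAbs = r.val - s.val := by omega
    rw [hn]
    push_cast [Nat.cast_sub (le_of_lt h)] at h2 ⊢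
    have h4 : (1:ℝ) ≤ (r.val:ℝ) - s.val := by
      have : (1:ℤ) ≤ (r.val:ℤ) - s.val := by omega
      exact_mod_cast this
    rw [_root_.abs_of_nonneg (by nlinarith)]
    linarith

lemma MVsumInvSq {n : ℕ} (lam : Fin n → ℝ) (δ : ℝ) (hδ : 0 < δ)
    (hsep : ∀ (i : ℕ) (h : i + 1 < n), lam ⟨i + 1, h⟩ - lam ⟨i, Nat.lt_of_succ_lt h⟩ ≥ δ)
    (s : Fin n) : ∑ r, (MVa lam r s)^2 ≤ π^2 / (3 * δ^2) := by
  classical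
  have key : ∀ r : Fin n, (MVa lam r s)^2 ≤
      (if r = s then 0 else 1 / (((r.val : ℤ) - s.val).natAbs : ℝ)^2) * (1/δ^2) := by
    intro r
    rcases eq_or_ne r s with h | h
    · simp [MVa, h]
    · rw [if_neg h]
      have hg := MVgap' lam δ hδ hsep r s h
      set m : ℕ := ((r.val : ℤ) - s.val).natAbs with hm
      have hm1 : 1 ≤ m := by
        have : r.val ≠ s.val := fun hh => h (Fin.ext hh)
        omega
      have hmpos : (0:ℝ) < m * δ := by positivity
      have h2 : (m * δ)^2 ≤ (lam r - lam s)^2 := by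
        rw [← _root_.sq_abs (lam r - lam s)]
        exact pow_le_pow_left₀ (le_of_lt hmpos) hg 2
      have h3 : (1:ℝ) / (m:ℝ)^2 * (1/δ^2) = 1/((m*δ)^2) := by
        rw [mul_pow]; ring
      rw [MVa, if_neg h, div_pow, one_pow, h3]
      exact one_div_le_one_div_of_le (by positivity) h2
  calc ∑ r, (MVa lam r s)^2
      ≤ ∑ r, (if r = s then 0 else 1 / (((r.val : ℤ) - s.val).natAbs : ℝ)^2) * (1/δ^2) :=
        Finset.sum_le_sum (fun r _ => key r)
    _ = (∑ r, if r = s then 0 else 1 / (((r.val : ℤ) - s.val).natAbs : ℝ)^2) * (1/δ^2) := by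
        rw [Finset.sum_mul]
    _ ≤ (π^2/3) * (1/δ^2) := by
        apply mul_le_mul_of_nonneg_right _ (by positivity)
        have basel : ∀ P : Finset ℕ, ∑ m ∈ P, 1/(m:ℝ)^2 ≤ π^2/6 := by
          intro P
          have hs : Summable (fun n : ℕ => (1:ℝ)/(n:ℝ)^2) := hasSum_zeta_two.summable
          calc ∑ m ∈ P, 1/(m:ℝ)^2 ≤ ∑' m : ℕ, 1/(m:ℝ)^2 :=
                Summable.sum_le_tsum P (fun i _ => by positivity) hs
            _ = π^2/6 := hasSum_zeta_two.tsum_eq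
        set g : Fin n → ℝ := fun r => if r = s then 0 else 1 / (((r.val : ℤ) - s.val).natAbs : ℝ)^2 with hg
        have hgnn : ∀ r, 0 ≤ g r := by
          intro r; rw [hg]; dsimp only; split <;> positivity
        have hsplit : (univ : Finset (Fin n)) =
            (univ.filter (fun r : Fin n => r.val < s.val)) ∪
            (univ.filter (fun r : Fin n => s.val < r.val)) ∪ {s} := by
          ext r
          simp only [Finset.mem_union, Finset.mem_filter, Finset.mem_univ, true_and,
            Finset.mem_singleton]
          constructor
          · intro _
            rcases Nat.lt_trichotomy r.val s.val with h | h | h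
            · exact Or.inl (Or.inl h)
            · exact Or.inr (Fin.ext h)
            · exact Or.inl (Or.inr h)
          · intro _; trivial
        have hone : ∀ (P : Finset (Fin n)), (∀ r ∈ P, r ≠ s) →
            (Set.InjOn (fun r : Fin n => ((r.val : ℤ) - s.val).natAbs) P) →
            ∑ r ∈ P, g r ≤ π^2/6 := by
          intro P hPne hinj
          have : ∑ r ∈ P, g r = ∑ m ∈ P.image (fun r : Fin n => ((r.val : ℤ) - s.val).natAbs),
              1/(m:ℝ)^2 := by
            rw [Finset.sum_image (fun x hx y hy h => hinj hx hy h)]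
            apply Finset.sum_congr rfl
            intro r hr
            rw [hg]; dsimp only; rw [if_neg (hPne r hr)]
          rw [this]; exact basel _
        rw [hsplit]
        rw [Finset.sum_union, Finset.sum_union]
        · have e1 : ∑ r ∈ univ.filter (fun r : Fin n => r.val < s.val), g r ≤ π^2/6 := by
            apply hone
            · intro r hr h; subst h; simp at hr
            · intro x hx y hy hxy
              have hxy' : ((x.val:ℤ) - s.val).natAbs = ((y.val:ℤ) - s.val).natAbs := hxy
              simp only [Finset.coe_filter, Set.mem_setOf_eq, Finset.mem_univ, true_and] at hx hy
              apply Fin.ext; omega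
          have e2 : ∑ r ∈ univ.filter (fun r : Fin n => s.val < r.val), g r ≤ π^2/6 := by
            apply hone
            · intro r hr h; subst h; simp at hr
            · intro x hx y hy hxy
              have hxy' : ((x.val:ℤ) - s.val).natAbs = ((y.val:ℤ) - s.val).natAbs := hxy
              simp only [Finset.coe_filter, Set.mem_setOf_eq, Finset.mem_univ, true_and] at hx hy
              apply Fin.ext; omega
          have e3 : ∑ r ∈ ({s} : Finset (Fin n)), g r = 0 := by
            rw [Finset.sum_singleton]; simp [hg]
          rw [e3]
          linarith
        · rw [Finset.disjoint_left]
          intro r hr hr2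
          simp only [Finset.mem_filter, Finset.mem_univ, true_and] at hr hr2
          omega
        · rw [Finset.disjoint_left]
          intro r hr hr2
          simp only [Finset.mem_union, Finset.mem_filter, Finset.mem_univ, true_and,
            Finset.mem_singleton] at hr hr2
          subst hr2
          rcases hr with h | h <;> omega
    _ = π^2 / (3 * δ^2) := by ring

lemma MVeig {n : ℕ} (lam : Fin n → ℝ) (δ : ℝ) (hδ : 0 < δ)
    (hinj : Function.Injective lam)
    (hgap : ∀ s : Fin n, ∑ r, (MVa lam r s)^2 ≤ π^2/(3*δ^2))
    (w : Fin n → ℂ) (hw : w ≠ 0) (ν : ℝ)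
    (heig : ∀ r, ∑ t, (MVa lam r t : ℂ) * w t = Complex.I * ν * w r) :
    ν^2 ≤ π^2/δ^2 := by
  classical
  set a : Fin n → Fin n → ℝ := MVa lam with ha
  set N : ℝ := ∑ s, Complex.normSq (w s) with hN
  have hNpos : 0 < N := by
    obtain ⟨s, hs⟩ : ∃ s, w s ≠ 0 := by
      by_contra h
      push_neg at h
      exact hw (funext h)
    apply Finset.sum_pos' (fun i _ => Complex.normSq_nonneg _)
    exact ⟨s, Finset.mem_univ s, Complex.normSq_pos.mpr hs⟩
  set K : Fin n → Fin n → ℝ := fun s t => ∑ r, a r s * a r t with hK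
  set σ : Fin n → ℝ := fun u => ∑ r, a r u with hσ
  have hB : (0:ℝ) < π^2/(3*δ^2) := by positivity
  set B : ℝ := π^2/(3*δ^2) with hBdef
  -- each row of a, squared, also bounded (by antisymmetry)
  have hgap' : ∀ s : Fin n, ∑ t, (a s t)^2 ≤ B := by
    intro s
    have : ∀ t, (a s t)^2 = (a t s)^2 := by
      intro t; rw [ha, MVa_antisymm lam s t]; ring
    rw [Finset.sum_congr rfl (fun t _ => this t)]
    exact hgap s
  -- Step K: off-diagonal formula
  have hKoff : ∀ s t : Fin n, s ≠ t → K s t = (σ s - σ t) * a s t + 2 * (a s t)^2 := by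
    intro s t hst
    have key : ∀ r, a r s * a r t = (a r s - a r t) * a s t
        + (if r = s then (a s t)^2 else 0) + (if r = t then (a s t)^2 else 0) := by
      intro r
      rcases eq_or_ne r s with h | h
      · subst h
        rw [if_pos rfl, if_neg hst]
        have h0 : a r r = 0 := by simp [ha, MVa]
        rw [h0]; ring
      · rcases eq_or_ne r t with h2 | h2
        · subst h2
          rw [if_neg h, if_pos rfl]
          have h0 : a r r = 0 := by simp [ha, MVa]
          have h1 : a r s = - a s r := by rw [ha, MVa_antisymm]
          rw [h0, h1]
          ring
        · rw [if_neg h, if_neg h2]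
          have hrs : lam r - lam s ≠ 0 := sub_ne_zero.mpr (fun hh => h (hinj hh))
          have hrt : lam r - lam t ≠ 0 := sub_ne_zero.mpr (fun hh => h2 (hinj hh))
          have hst' : lam s - lam t ≠ 0 := sub_ne_zero.mpr (fun hh => hst (hinj hh))
          rw [ha]
          unfold MVa
          rw [if_neg h, if_neg h2, if_neg hst]
          field_simp
          try ring
    rw [hK]
    dsimp only
    rw [Finset.sum_congr rfl (fun r _ => key r)]
    rw [Finset.sum_add_distrib, Finset.sum_add_distrib]
    rw [Finset.sum_ite_eq' univ s (fun _ => (a s t)^2), Finset.sum_ite_eq' univ t (fun _ => (a s t)^2)]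
    simp only [Finset.mem_univ, if_pos]
    rw [← Finset.sum_mul, Finset.sum_sub_distrib]
    rw [hσ]
    ring
  -- expansion identity
  have expand : (ν^2 * N : ℂ) = ∑ s, ∑ t, (w s * (starRingEnd ℂ) (w t)) * ((K s t : ℝ) : ℂ) := by
    have step1 : ∀ r, ((ν^2 : ℝ) : ℂ) * ((Complex.normSq (w r) : ℝ) : ℂ)
        = (∑ t, (a r t : ℂ) * w t) * (starRingEnd ℂ) (∑ t, (a r t : ℂ) * w t) := by
      intro r
      rw [heig r, Complex.mul_conj]
      push_cast
      simp only [Complex.normSq_mul, Complex.normSq_I, Complex.normSq_ofReal]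
      push_cast
      ring
    calc (ν^2 * N : ℂ) = ∑ r, ((ν^2 : ℝ) : ℂ) * ((Complex.normSq (w r) : ℝ) : ℂ) := by
          rw [hN]; push_cast; rw [Finset.mul_sum]
      _ = ∑ r, (∑ s, (a r s : ℂ) * w s) * (starRingEnd ℂ) (∑ t, (a r t : ℂ) * w t) := by
          exact Finset.sum_congr rfl (fun r _ => step1 r)
      _ = ∑ r, ∑ s, ∑ t, ((a r s : ℂ) * w s) * ((a r t : ℂ) * (starRingEnd ℂ) (w t)) := by
          apply Finset.sum_congr rfl
          intro r _
          rw [map_sum, Finset.sum_mul_sum]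
          apply Finset.sum_congr rfl; intro s _
          apply Finset.sum_congr rfl; intro t _
          rw [map_mul, Complex.conj_ofReal]
      _ = ∑ s, ∑ t, ∑ r, ((a r s : ℂ) * w s) * ((a r t : ℂ) * (starRingEnd ℂ) (w t)) := by
          rw [Finset.sum_comm]
          apply Finset.sum_congr rfl
          intro s _
          rw [Finset.sum_comm]
      _ = ∑ s, ∑ t, (w s * (starRingEnd ℂ) (w t)) * ((K s t : ℝ) : ℂ) := by
          apply Finset.sum_congr rfl; intro s _
          apply Finset.sum_congr rfl; intro t _
          rw [hK]
          push_cast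
          rw [Finset.mul_sum]
          apply Finset.sum_congr rfl; intro r _
          ring
  set G : Fin n → Fin n → ℝ := fun s t => (σ s - σ t) * a s t + 2 * (a s t)^2 with hG
  have hGdiag : ∀ s, G s s = 0 := by
    intro s; simp [hG, ha, MVa]
  have split : ∑ s, ∑ t, (w s * (starRingEnd ℂ) (w t)) * ((K s t : ℝ) : ℂ)
      = ∑ s, (w s * (starRingEnd ℂ) (w s)) * ((K s s : ℝ) : ℂ)
        + ∑ s, ∑ t, (w s * (starRingEnd ℂ) (w t)) * ((G s t : ℝ) : ℂ) := by
    have key : ∀ s, ∑ t, (w s * (starRingEnd ℂ) (w t)) * ((K s t : ℝ) : ℂ)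
        = (w s * (starRingEnd ℂ) (w s)) * ((K s s : ℝ) : ℂ)
          + ∑ t, (w s * (starRingEnd ℂ) (w t)) * ((G s t : ℝ) : ℂ) := by
      intro s
      have h1 : ∑ t, (w s * (starRingEnd ℂ) (w t)) * ((K s t : ℝ) : ℂ)
          = ∑ t, ((w s * (starRingEnd ℂ) (w t)) * ((G s t : ℝ) : ℂ)
            + if t = s then (w s * (starRingEnd ℂ) (w s)) * ((K s s : ℝ) : ℂ) else 0) := by
        apply Finset.sum_congr rfl
        intro t _
        rcases eq_or_ne t s with h | h
        · subst h
          rw [if_pos rfl, hGdiag]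
          push_cast
          ring
        · rw [if_neg h, add_zero, hKoff s t (Ne.symm h), hG]
      rw [h1, Finset.sum_add_distrib, Finset.sum_ite_eq' univ s
        (fun _ => (w s * (starRingEnd ℂ) (w s)) * ((K s s : ℝ) : ℂ))]
      simp only [Finset.mem_univ, if_pos]
      ring
    rw [Finset.sum_congr rfl (fun s _ => key s), Finset.sum_add_distrib]
  have hasum : ∀ t, ∑ s, ((a s t : ℝ) : ℂ) * w s = - (Complex.I * ν * w t) := by
    intro t
    have h1 : ∀ s, ((a s t : ℝ):ℂ) * w s = - (((a t s : ℝ):ℂ) * w s) := by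
      intro s
      rw [ha, MVa_antisymm lam t s]
      push_cast; ring
    rw [Finset.sum_congr rfl (fun s _ => h1 s), Finset.sum_neg_distrib, heig t]
  have cancel : ∑ s, ∑ t, (w s * (starRingEnd ℂ) (w t)) * (((σ s - σ t) * a s t : ℝ) : ℂ) = 0 := by
    have hX : ∀ s, ∑ t, (w s * (starRingEnd ℂ) (w t)) * ((σ s * a s t : ℝ) : ℂ)
        = ((σ s : ℝ):ℂ) * (w s * (starRingEnd ℂ) (w s)) * (-(Complex.I * ν)) := by
      intro s
      have h1 : ∑ t, (w s * (starRingEnd ℂ) (w t)) * ((σ s * a s t : ℝ):ℂ)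
          = w s * ((σ s:ℝ):ℂ) * (starRingEnd ℂ) (∑ t, ((a s t:ℝ):ℂ) * w t) := by
        rw [map_sum, Finset.mul_sum]
        apply Finset.sum_congr rfl; intro t _
        rw [map_mul, Complex.conj_ofReal]
        push_cast; ring
      rw [h1, heig s, map_mul, map_mul, Complex.conj_I, Complex.conj_ofReal]
      ring
    have hY : ∀ t, ∑ s, (w s * (starRingEnd ℂ) (w t)) * ((σ t * a s t : ℝ):ℂ)
        = ((σ t:ℝ):ℂ) * (w t * (starRingEnd ℂ) (w t)) * (-(Complex.I * ν)) := by
      intro t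
      have h1 : ∑ s, (w s * (starRingEnd ℂ) (w t)) * ((σ t * a s t:ℝ):ℂ)
          = (starRingEnd ℂ) (w t) * ((σ t:ℝ):ℂ) * (∑ s, ((a s t:ℝ):ℂ) * w s) := by
        rw [Finset.mul_sum]
        apply Finset.sum_congr rfl; intro s _
        push_cast; ring
      rw [h1, hasum t]
      ring
    have hsplit2 : ∑ s, ∑ t, (w s * (starRingEnd ℂ) (w t)) * (((σ s - σ t) * a s t : ℝ):ℂ)
        = (∑ s, ∑ t, (w s * (starRingEnd ℂ) (w t)) * ((σ s * a s t:ℝ):ℂ))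
          - (∑ s, ∑ t, (w s * (starRingEnd ℂ) (w t)) * ((σ t * a s t:ℝ):ℂ)) := by
      rw [← Finset.sum_sub_distrib]
      apply Finset.sum_congr rfl; intro s _
      rw [← Finset.sum_sub_distrib]
      apply Finset.sum_congr rfl; intro t _
      push_cast; ring
    rw [hsplit2, Finset.sum_congr rfl (fun s _ => hX s), Finset.sum_comm,
      Finset.sum_congr rfl (fun t _ => hY t), sub_self]
  set Z : ℂ := ∑ s, ∑ t, (w s * (starRingEnd ℂ) (w t)) * (((a s t)^2 : ℝ) : ℂ) with hZ
  have hGsplit : ∑ s, ∑ t, (w s * (starRingEnd ℂ) (w t)) * ((G s t : ℝ) : ℂ)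
      = ∑ s, ∑ t, (w s * (starRingEnd ℂ) (w t)) * (((σ s - σ t) * a s t : ℝ) : ℂ) + 2 * Z := by
    rw [hZ, Finset.mul_sum, ← Finset.sum_add_distrib]
    apply Finset.sum_congr rfl; intro s _
    rw [Finset.mul_sum, ← Finset.sum_add_distrib]
    apply Finset.sum_congr rfl; intro t _
    rw [hG]
    push_cast; ring
  have hdiag : ∑ s, (w s * (starRingEnd ℂ) (w s)) * ((K s s : ℝ) : ℂ)
      = (((∑ s, Complex.normSq (w s) * K s s : ℝ)) : ℂ) := by
    push_cast
    apply Finset.sum_congr rfl; intro s _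
    rw [Complex.mul_conj]
  have hID : ((ν^2 * N : ℝ) : ℂ) = (((∑ s, Complex.normSq (w s) * K s s : ℝ)) : ℂ) + 2 * Z := by
    push_cast
    rw [expand, split, hGsplit, cancel, zero_add, hdiag]
    push_cast
    ring
  have hre : ν^2 * N = (∑ s, Complex.normSq (w s) * K s s) + 2 * Z.re := by
    have h := congrArg Complex.re hID
    simp only [Complex.ofReal_re, Complex.add_re, Complex.mul_re, Complex.re_ofNat,
      Complex.im_ofNat, zero_mul, sub_zero] at h
    exact h
  -- bound the diagonal sum
  have bound1 : ∑ s, Complex.normSq (w s) * K s s ≤ B * N := by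
    have : ∀ s : Fin n, Complex.normSq (w s) * K s s ≤ Complex.normSq (w s) * B := by
      intro s
      apply mul_le_mul_of_nonneg_left _ (Complex.normSq_nonneg _)
      have : K s s = ∑ r, (a r s)^2 := by
        rw [hK]; dsimp only
        apply Finset.sum_congr rfl; intro r _; ring
      rw [this]
      exact hgap s
    calc ∑ s, Complex.normSq (w s) * K s s ≤ ∑ s, Complex.normSq (w s) * B :=
          Finset.sum_le_sum (fun s _ => this s)
      _ = B * N := by
          rw [hN, Finset.mul_sum]
          exact Finset.sum_congr rfl (fun s _ => by ring)
  -- bound Z.re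
  have bound2 : Z.re ≤ B * N := by
    have hterm : ∀ s t : Fin n, ((w s * (starRingEnd ℂ) (w t)) * (((a s t)^2 : ℝ) : ℂ)).re
        ≤ (Complex.normSq (w s) + Complex.normSq (w t))/2 * (a s t)^2 := by
      intro s t
      have h1 : ((w s * (starRingEnd ℂ) (w t)) * (((a s t)^2 : ℝ) : ℂ)).re
          ≤ ‖(w s * (starRingEnd ℂ) (w t)) * (((a s t)^2 : ℝ) : ℂ)‖ :=
        Complex.re_le_norm _
      have h2 : ‖(w s * (starRingEnd ℂ) (w t)) * (((a s t)^2 : ℝ) : ℂ)‖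
          = ‖w s‖ * ‖w t‖ * (a s t)^2 := by
        rw [norm_mul, norm_mul, RCLike.norm_conj, Complex.norm_real, Real.norm_eq_abs,
          _root_.abs_of_nonneg (sq_nonneg (a s t))]
      have h3 : ‖w s‖ * ‖w t‖
          ≤ (Complex.normSq (w s) + Complex.normSq (w t))/2 := by
        rw [← Complex.sq_norm, ← Complex.sq_norm]
        nlinarith [sq_nonneg (‖w s‖ - ‖w t‖),
          norm_nonneg (w s), norm_nonneg (w t)]
      calc ((w s * (starRingEnd ℂ) (w t)) * (((a s t)^2 : ℝ) : ℂ)).re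
          ≤ ‖w s‖ * ‖w t‖ * (a s t)^2 := by rw [← h2]; exact h1
        _ ≤ (Complex.normSq (w s) + Complex.normSq (w t))/2 * (a s t)^2 :=
            mul_le_mul_of_nonneg_right h3 (sq_nonneg _)
    have hZre : Z.re = ∑ s, ∑ t, ((w s * (starRingEnd ℂ) (w t)) * (((a s t)^2 : ℝ) : ℂ)).re := by
      rw [hZ, Complex.re_sum]
      apply Finset.sum_congr rfl; intro s _
      rw [Complex.re_sum]
    rw [hZre]
    calc ∑ s, ∑ t, ((w s * (starRingEnd ℂ) (w t)) * (((a s t)^2 : ℝ) : ℂ)).re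
        ≤ ∑ s, ∑ t, (Complex.normSq (w s) + Complex.normSq (w t))/2 * (a s t)^2 :=
          Finset.sum_le_sum (fun s _ => Finset.sum_le_sum (fun t _ => hterm s t))
      _ = (∑ s, Complex.normSq (w s)/2 * (∑ t, (a s t)^2))
          + (∑ t, Complex.normSq (w t)/2 * (∑ s, (a s t)^2)) := by
          have e1 : ∀ s : Fin n, ∑ t, (Complex.normSq (w s) + Complex.normSq (w t))/2 * (a s t)^2
              = Complex.normSq (w s)/2 * (∑ t, (a s t)^2)
                + ∑ t, Complex.normSq (w t)/2 * (a s t)^2 := by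
            intro s
            rw [Finset.mul_sum, ← Finset.sum_add_distrib]
            exact Finset.sum_congr rfl (fun t _ => by ring)
          rw [Finset.sum_congr rfl (fun s _ => e1 s), Finset.sum_add_distrib]
          congr 1
          rw [Finset.sum_comm]
          exact Finset.sum_congr rfl (fun t _ => (Finset.mul_sum _ _ _).symm)
      _ ≤ (∑ s, Complex.normSq (w s)/2 * B) + (∑ t, Complex.normSq (w t)/2 * B) := by
          apply add_le_add
          · apply Finset.sum_le_sum; intro s _
            exact mul_le_mul_of_nonneg_left (hgap' s)
              (div_nonneg (Complex.normSq_nonneg _) (by norm_num))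
          · apply Finset.sum_le_sum; intro t _
            exact mul_le_mul_of_nonneg_left (hgap t)
              (div_nonneg (Complex.normSq_nonneg _) (by norm_num))
      _ = B * N := by
          rw [hN, ← Finset.sum_add_distrib, Finset.mul_sum]
          exact Finset.sum_congr rfl (fun s _ => by ring)
  have hδ' : δ ≠ 0 := ne_of_gt hδ
  have h3 : ν^2 ≤ 3 * B := by
    have h4 : ν^2 * N ≤ (3*B) * N := by nlinarith [bound1, bound2, hre]
    exact le_of_mul_le_mul_right h4 hNpos
  rw [hBdef] at h3
  calc ν^2 ≤ 3 * (π^2/(3*δ^2)) := h3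
    _ = π^2/δ^2 := by field_simp

open Matrix in
lemma MVhilbert {n : ℕ} (lam : Fin n → ℝ) (δ : ℝ) (hδ : 0 < δ)
    (hinj : Function.Injective lam)
    (hgap : ∀ s : Fin n, ∑ r, (MVa lam r s)^2 ≤ π^2/(3*δ^2))
    (z : Fin n → ℂ) :
    ‖∑ s, ∑ t, (starRingEnd ℂ) (z s) * z t * ((MVa lam s t : ℝ) : ℂ)‖
      ≤ π/δ * ∑ s, Complex.normSq (z s) := by
  classical
  set a : Fin n → Fin n → ℝ := MVa lam with ha
  set H : Matrix (Fin n) (Fin n) ℂ :=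
    Matrix.of (fun s t => Complex.I * ((a s t : ℝ) : ℂ)) with hH
  have hHerm : H.IsHermitian := by
    unfold Matrix.IsHermitian
    ext s t
    rw [Matrix.conjTranspose_apply, hH]
    simp only [Matrix.of_apply, star_mul', Complex.star_def, Complex.conj_I, Complex.conj_ofReal]
    rw [ha, MVa_antisymm lam s t]
    push_cast
    ring
  have hIx : ∀ x : ℂ, -Complex.I * (Complex.I * x) = x := by
    intro x
    rw [← mul_assoc, neg_mul, Complex.I_mul_I, neg_neg, one_mul]
  -- eigenvalue bound
  have heigbound : ∀ i, |hHerm.eigenvalues i| ≤ π/δ := by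
    intro i
    set μ : ℝ := hHerm.eigenvalues i with hμ
    set w : Fin n → ℂ := ⇑(hHerm.eigenvectorBasis i) with hwdef
    have hwne : w ≠ 0 := by
      intro h
      exact hHerm.eigenvectorBasis.orthonormal.ne_zero i
        ((WithLp.equiv 2 (Fin n → ℂ)).injective h)
    have hmv : H *ᵥ w = μ • w := hHerm.mulVec_eigenvectorBasis i
    have h1 : ∀ r, ∑ t, Complex.I * ((a r t : ℝ):ℂ) * w t = (μ:ℂ) * w r := by
      intro r
      have := congrFun hmv r
      rw [Matrix.mulVec, dotProduct] at this
      simpa [hH, Pi.smul_apply, Complex.real_smul] using this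
    have h2 : ∀ r, ∑ t, ((a r t:ℝ):ℂ) * w t = Complex.I * ((-μ : ℝ):ℂ) * w r := by
      intro r
      calc ∑ t, ((a r t:ℝ):ℂ) * w t
          = -Complex.I * ∑ t, Complex.I * ((a r t:ℝ):ℂ) * w t := by
            rw [Finset.mul_sum]
            apply Finset.sum_congr rfl; intro t _
            rw [mul_assoc, hIx]
        _ = -Complex.I * ((μ:ℂ) * w r) := by rw [h1 r]
        _ = Complex.I * ((-μ : ℝ):ℂ) * w r := by push_cast; ring
    have hb := MVeig lam δ hδ hinj hgap w hwne (-μ) h2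
    have hc : (0:ℝ) < π/δ := by positivity
    have hd : (-μ)^2 = μ^2 := by ring
    have hd2 : π^2/δ^2 = (π/δ)^2 := by rw [div_pow]
    rw [hd, hd2] at hb
    rw [abs_le]
    constructor <;> nlinarith [hb, hc]
  -- quadratic form bound
  have hquad : ∀ v : EuclideanSpace ℂ (Fin n),
      ‖(inner ℂ v (WithLp.toLp 2 (H *ᵥ v : Fin n → ℂ) : EuclideanSpace ℂ (Fin n)) : ℂ)‖ ≤ π/δ * ‖v‖^2 := by
    intro v
    set b := hHerm.eigenvectorBasis with hb
    set μ : Fin n → ℝ := hHerm.eigenvalues with hμ2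
    set cr : Fin n → ℂ := fun i => b.repr v i with hcr
    have hv2 : v = ∑ i, cr i • b i := (b.sum_repr v).symm
    have hHb : ∀ i, H *ᵥ ⇑(b i) = (μ i : ℂ) • ⇑(b i) := by
      intro i
      rw [hHerm.mulVec_eigenvectorBasis i]
      funext r
      simp [Complex.real_smul]
      rfl
    have key : ∀ i,
        (inner ℂ (b i) (WithLp.toLp 2 (H *ᵥ (v : Fin n → ℂ) : Fin n → ℂ) : EuclideanSpace ℂ (Fin n)) : ℂ)
          = (μ i : ℂ) * cr i := by
      intro i
      rw [EuclideanSpace.inner_eq_star_dotProduct, dotProduct_comm]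
      have h5 : star ((WithLp.equiv 2 (Fin n → ℂ)) (b i)) ᵥ* H
          = star ((μ i : ℂ) • (WithLp.equiv 2 (Fin n → ℂ)) (b i)) := by
        have h6 : H = Hᴴ := hHerm.symm
        rw [h6, ← Matrix.star_mulVec]
        congr 1
        exact hHb i
      calc dotProduct (star ((WithLp.equiv 2 (Fin n → ℂ)) (b i)))
            ((WithLp.equiv 2 (Fin n → ℂ)) (WithLp.toLp 2 (H *ᵥ (v : Fin n → ℂ) : Fin n → ℂ) : EuclideanSpace ℂ (Fin n)))
          = star ((WithLp.equiv 2 (Fin n → ℂ)) (b i)) ⬝ᵥ (H *ᵥ (v : Fin n → ℂ)) := rfl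
        _ = (star ((WithLp.equiv 2 (Fin n → ℂ)) (b i)) ᵥ* H) ⬝ᵥ (v : Fin n → ℂ) :=
            Matrix.dotProduct_mulVec _ _ _
        _ = (star ((μ i : ℂ) • (WithLp.equiv 2 (Fin n → ℂ)) (b i))) ⬝ᵥ (v : Fin n → ℂ) := by
            rw [h5]
        _ = (μ i : ℂ) * (star ((WithLp.equiv 2 (Fin n → ℂ)) (b i)) ⬝ᵥ (v : Fin n → ℂ)) := by
            rw [star_smul, smul_dotProduct]
            simp [Complex.star_def, Complex.conj_ofReal, smul_eq_mul]
        _ = (μ i : ℂ) * cr i := by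
            rw [hcr]
            dsimp only
            rw [b.repr_apply_apply v i, EuclideanSpace.inner_eq_star_dotProduct, dotProduct_comm]
            rfl
    have hexp : (inner ℂ (∑ j, cr j • b j)
          (WithLp.toLp 2 (H *ᵥ (v : Fin n → ℂ) : Fin n → ℂ) : EuclideanSpace ℂ (Fin n)) : ℂ)
        = ∑ i, (starRingEnd ℂ) (cr i) * ((μ i : ℂ) * cr i) := by
      rw [sum_inner]
      apply Finset.sum_congr rfl; intro i _
      rw [inner_smul_left, key i]
    rw [← hv2] at hexp
    rw [hexp]
    have parseval : ∑ i, Complex.normSq (cr i) = ‖v‖^2 := by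
      have h7 : ‖b.repr v‖ = ‖v‖ := b.repr.norm_map v
      rw [← h7, EuclideanSpace.norm_eq,
        Real.sq_sqrt (Finset.sum_nonneg (fun i _ => sq_nonneg _))]
      apply Finset.sum_congr rfl; intro i _
      rw [Complex.normSq_eq_norm_sq]
    calc ‖∑ i, (starRingEnd ℂ) (cr i) * ((μ i : ℂ) * cr i)‖
        ≤ ∑ i, ‖(starRingEnd ℂ) (cr i) * ((μ i : ℂ) * cr i)‖ := norm_sum_le _ _
      _ = ∑ i, |μ i| * Complex.normSq (cr i) := by
          apply Finset.sum_congr rfl; intro i _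
          rw [norm_mul, norm_mul, RCLike.norm_conj]
          rw [Complex.norm_real, Complex.normSq_eq_norm_sq,
            Real.norm_eq_abs]
          ring
      _ ≤ ∑ i, (π/δ) * Complex.normSq (cr i) := by
          apply Finset.sum_le_sum; intro i _
          exact mul_le_mul_of_nonneg_right (heigbound i) (Complex.normSq_nonneg _)
      _ = π/δ * ‖v‖^2 := by rw [← Finset.mul_sum, parseval]
  -- specialize
  set v : EuclideanSpace ℂ (Fin n) := (WithLp.equiv 2 (Fin n → ℂ)).symm z with hv
  have hform : (inner ℂ v (WithLp.toLp 2 (H *ᵥ v : Fin n → ℂ) : EuclideanSpace ℂ (Fin n)) : ℂ)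
      = Complex.I * ∑ s, ∑ t, (starRingEnd ℂ) (z s) * z t * ((a s t : ℝ):ℂ) := by
    rw [PiLp.inner_apply]
    rw [Finset.mul_sum]
    apply Finset.sum_congr rfl; intro s _
    have hHs : (H *ᵥ (v : Fin n → ℂ)) s = ∑ t, Complex.I * ((a s t:ℝ):ℂ) * z t := by
      rw [Matrix.mulVec, dotProduct]
      apply Finset.sum_congr rfl; intro t _
      rfl
    calc (inner ℂ (v s) ((WithLp.toLp 2 (H *ᵥ (v : Fin n → ℂ) : Fin n → ℂ) : EuclideanSpace ℂ (Fin n)) s) : ℂ)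
        = (starRingEnd ℂ) (z s) * ∑ t, Complex.I * ((a s t:ℝ):ℂ) * z t := by
          rw [RCLike.inner_apply, WithLp.ofLp_toLp, hHs, mul_comm]
          rfl
      _ = ∑ t, Complex.I * ((starRingEnd ℂ) (z s) * z t * ((a s t:ℝ):ℂ)) := by
          rw [Finset.mul_sum]
          apply Finset.sum_congr rfl; intro t _
          ring
      _ = Complex.I * ∑ t, (starRingEnd ℂ) (z s) * z t * ((a s t:ℝ):ℂ) := by
          rw [Finset.mul_sum]
  have hnorm : ‖v‖^2 = ∑ s, Complex.normSq (z s) := by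
    rw [EuclideanSpace.norm_eq]
    rw [Real.sq_sqrt (Finset.sum_nonneg (fun s _ => sq_nonneg _))]
    apply Finset.sum_congr rfl; intro s _
    rw [Complex.normSq_eq_norm_sq]
    rfl
  have := hquad v
  rw [hform, hnorm] at this
  rw [norm_mul, Complex.norm_I, one_mul] at this
  exact this

-- norm bound for the unconjugated form
lemma MVhilbert' {n : ℕ} (lam : Fin n → ℝ) (δ : ℝ) (hδ : 0 < δ)
    (hinj : Function.Injective lam)
    (hgap : ∀ s : Fin n, ∑ r, (MVa lam r s)^2 ≤ π^2/(3*δ^2))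
    (z : Fin n → ℂ) :
    ‖∑ s, ∑ t, z s * (starRingEnd ℂ) (z t) * ((MVa lam s t : ℝ) : ℂ)‖
      ≤ π/δ * ∑ s, Complex.normSq (z s) := by
  have h1 : ∑ s, ∑ t, z s * (starRingEnd ℂ) (z t) * ((MVa lam s t : ℝ) : ℂ)
      = (starRingEnd ℂ) (∑ s, ∑ t, (starRingEnd ℂ) (z s) * z t * ((MVa lam s t : ℝ) : ℂ)) := by
    rw [map_sum]
    apply Finset.sum_congr rfl; intro s _
    rw [map_sum]
    apply Finset.sum_congr rfl; intro t _
    rw [map_mul, map_mul, Complex.conj_conj, Complex.conj_ofReal]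
  rw [h1, RCLike.norm_conj]
  exact MVhilbert lam δ hδ hinj hgap z

theorem stmt_3 (n : ℕ) (lam : Fin n → ℝ) (δ : ℝ) (hδ : 0 < δ)
    (hmono : StrictMono lam)
    (hsep : ∀ (i : ℕ) (h : i + 1 < n), lam ⟨i + 1, h⟩ - lam ⟨i, Nat.lt_of_succ_lt h⟩ ≥ δ)
    (c : Fin n → ℂ) (T : ℝ) (hT : 0 < T) :
    (1 / T) * ∫ t in (0:ℝ)..T, ‖∑ k, c k * Complex.exp (Complex.I * lam k * t)‖ ^ 2 ≥
      (1 - 2 * π / (T * δ)) * ∑ k, ‖c k‖ ^ 2 ∧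
    (T > 4 * π / δ →
      (1 / T) * ∫ t in (0:ℝ)..T, ‖∑ k, c k * Complex.exp (Complex.I * lam k * t)‖ ^ 2 ≥
        (1 / 2) * ∑ k, ‖c k‖ ^ 2) := by
  classical
  have hinj : Function.Injective lam := hmono.injective
  have hπ : (0:ℝ) < π := Real.pi_pos
  set S : ℝ → ℂ := fun t => ∑ k, c k * Complex.exp (Complex.I * lam k * t) with hS
  set Cs : ℝ := ∑ k, ‖c k‖ ^ 2 with hCs
  have hCs0 : 0 ≤ Cs := Finset.sum_nonneg (fun k _ => sq_nonneg _)
  -- pointwise expansion of |S t|^2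
  have hpt : ∀ t : ℝ, ((‖S t‖^2 : ℝ) : ℂ)
      = ∑ j, ∑ k, c j * (starRingEnd ℂ) (c k)
          * Complex.exp (Complex.I * ((lam j - lam k : ℝ) : ℂ) * t) := by
    intro t
    have h1 : ((‖S t‖^2 : ℝ) : ℂ) = S t * (starRingEnd ℂ) (S t) := by
      rw [Complex.mul_conj]
      norm_cast
      rw [Complex.normSq_eq_norm_sq]
    rw [h1, hS]
    dsimp only
    rw [map_sum, Finset.sum_mul_sum]
    apply Finset.sum_congr rfl; intro j _
    apply Finset.sum_congr rfl; intro k _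
    rw [map_mul, ← Complex.exp_conj]
    have hmul : Complex.exp (Complex.I * lam j * t)
        * Complex.exp ((starRingEnd ℂ) (Complex.I * lam k * t))
        = Complex.exp (Complex.I * ((lam j - lam k : ℝ) : ℂ) * t) := by
      rw [← Complex.exp_add]
      congr 1
      rw [map_mul, map_mul, Complex.conj_I, Complex.conj_ofReal, Complex.conj_ofReal]
      push_cast
      ring
    calc c j * Complex.exp (Complex.I * lam j * t)
          * ((starRingEnd ℂ) (c k) * Complex.exp ((starRingEnd ℂ) (Complex.I * lam k * t)))
        = c j * (starRingEnd ℂ) (c k) * (Complex.exp (Complex.I * lam j * t)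
            * Complex.exp ((starRingEnd ℂ) (Complex.I * lam k * t))) := by ring
      _ = c j * (starRingEnd ℂ) (c k) * Complex.exp (Complex.I * ((lam j - lam k : ℝ) : ℂ) * t) := by
          rw [hmul]
  -- values of the elementary integrals
  have hIval : ∀ j k : Fin n, (∫ t in (0:ℝ)..T, Complex.exp (Complex.I * ((lam j - lam k : ℝ):ℂ) * t))
      = if j = k then (T:ℂ)
        else (Complex.exp (Complex.I * ((lam j - lam k : ℝ):ℂ) * T) - 1)
          / (Complex.I * ((lam j - lam k : ℝ):ℂ)) := by
    intro j k
    rcases eq_or_ne j k with h | h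
    · subst h
      rw [if_pos rfl]
      have : ∀ t : ℝ, Complex.exp (Complex.I * ((lam j - lam j : ℝ):ℂ) * t) = 1 := by
        intro t
        simp [sub_self]
      rw [intervalIntegral.integral_congr (fun t _ => this t)]
      simp
    · rw [if_neg h]
      have hne : lam j - lam k ≠ 0 := sub_ne_zero.mpr (fun hh => h (hinj hh))
      have hx : Complex.I * ((lam j - lam k : ℝ):ℂ) ≠ 0 :=
        mul_ne_zero Complex.I_ne_zero (Complex.ofReal_ne_zero.mpr hne)
      rw [integral_exp_mul_complex hx]
      norm_num
  -- the error term
  set E : ℂ := ∑ j, ∑ k, (if j = k then 0 else c j * (starRingEnd ℂ) (c k)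
      * ((Complex.exp (Complex.I * ((lam j - lam k : ℝ):ℂ) * T) - 1)
        / (Complex.I * ((lam j - lam k : ℝ):ℂ)))) with hE
  -- the integral identity
  have hint : ((∫ t in (0:ℝ)..T, ‖S t‖^2 : ℝ) : ℂ) = (T : ℂ) * (Cs : ℂ) + E := by
    have hcont : ∀ (j k : Fin n), Continuous (fun t : ℝ =>
        c j * (starRingEnd ℂ) (c k) * Complex.exp (Complex.I * ((lam j - lam k : ℝ):ℂ) * t)) := by
      intro j k
      apply Continuous.mul continuous_const
      apply Complex.continuous_exp.comp
      exact (continuous_const.mul Complex.continuous_ofReal)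
    calc ((∫ t in (0:ℝ)..T, ‖S t‖^2 : ℝ) : ℂ)
        = ∫ t in (0:ℝ)..T, ((‖S t‖^2 : ℝ) : ℂ) := (intervalIntegral.integral_ofReal).symm
      _ = ∫ t in (0:ℝ)..T, ∑ j, ∑ k, c j * (starRingEnd ℂ) (c k)
            * Complex.exp (Complex.I * ((lam j - lam k : ℝ):ℂ) * t) :=
          intervalIntegral.integral_congr (fun t _ => hpt t)
      _ = ∑ j, ∫ t in (0:ℝ)..T, ∑ k, c j * (starRingEnd ℂ) (c k)
            * Complex.exp (Complex.I * ((lam j - lam k : ℝ):ℂ) * t) := by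
          apply intervalIntegral.integral_finset_sum
          intro j _
          apply Continuous.intervalIntegrable
          exact continuous_finset_sum _ (fun k _ => hcont j k)
      _ = ∑ j, ∑ k, ∫ t in (0:ℝ)..T, c j * (starRingEnd ℂ) (c k)
            * Complex.exp (Complex.I * ((lam j - lam k : ℝ):ℂ) * t) := by
          apply Finset.sum_congr rfl; intro j _
          apply intervalIntegral.integral_finset_sum
          intro k _
          exact (hcont j k).intervalIntegrable _ _
      _ = ∑ j, ∑ k, c j * (starRingEnd ℂ) (c k)
            * ∫ t in (0:ℝ)..T, Complex.exp (Complex.I * ((lam j - lam k : ℝ):ℂ) * t) := by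
          apply Finset.sum_congr rfl; intro j _
          apply Finset.sum_congr rfl; intro k _
          exact intervalIntegral.integral_const_mul _ _
      _ = ∑ j, ∑ k, ((if k = j then c j * (starRingEnd ℂ) (c j) * (T:ℂ) else 0)
            + (if j = k then 0 else c j * (starRingEnd ℂ) (c k)
              * ((Complex.exp (Complex.I * ((lam j - lam k : ℝ):ℂ) * T) - 1)
                / (Complex.I * ((lam j - lam k : ℝ):ℂ))))) := by
          apply Finset.sum_congr rfl; intro j _
          apply Finset.sum_congr rfl; intro k _
          rw [hIval j k]
          rcases eq_or_ne j k with h | h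
          · subst h; simp
          · rw [if_neg h, if_neg (Ne.symm h), if_neg h, zero_add]
      _ = (T : ℂ) * (Cs : ℂ) + E := by
          rw [hE]
          have h3 : ∀ j : Fin n, ∑ k, (if k = j then c j * (starRingEnd ℂ) (c j) * (T:ℂ) else 0)
              = c j * (starRingEnd ℂ) (c j) * (T:ℂ) := by
            intro j
            rw [Finset.sum_ite_eq' univ j (fun _ => c j * (starRingEnd ℂ) (c j) * (T:ℂ))]
            simp
          have h4 : ∑ j, c j * (starRingEnd ℂ) (c j) * (T:ℂ) = (T:ℂ) * (Cs:ℂ) := by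
            rw [hCs]
            push_cast
            rw [Finset.mul_sum]
            apply Finset.sum_congr rfl; intro j _
            rw [Complex.mul_conj]
            norm_cast
            rw [Complex.normSq_eq_norm_sq]
            ring
          calc ∑ j, ∑ k, ((if k = j then c j * (starRingEnd ℂ) (c j) * (T:ℂ) else 0)
                + (if j = k then 0 else c j * (starRingEnd ℂ) (c k)
                  * ((Complex.exp (Complex.I * ((lam j - lam k : ℝ):ℂ) * T) - 1)
                    / (Complex.I * ((lam j - lam k : ℝ):ℂ)))))
              = ∑ j, (c j * (starRingEnd ℂ) (c j) * (T:ℂ)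
                + ∑ k, (if j = k then 0 else c j * (starRingEnd ℂ) (c k)
                  * ((Complex.exp (Complex.I * ((lam j - lam k : ℝ):ℂ) * T) - 1)
                    / (Complex.I * ((lam j - lam k : ℝ):ℂ))))) := by
                apply Finset.sum_congr rfl; intro j _
                rw [Finset.sum_add_distrib, h3 j]
            _ = (T : ℂ) * (Cs : ℂ) + _ := by
                rw [Finset.sum_add_distrib, h4]
  -- bound on E
  have hEbound : ‖E‖ ≤ 2 * π / δ * Cs := by
    set d : Fin n → ℂ := fun j => c j * Complex.exp (Complex.I * lam j * T) with hd
    have hgap : ∀ s : Fin n, ∑ r, (MVa lam r s)^2 ≤ π^2/(3*δ^2) :=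
      fun s => MVsumInvSq lam δ hδ hsep s
    have hEeq : E = -Complex.I * ((∑ j, ∑ k, d j * (starRingEnd ℂ) (d k) * ((MVa lam j k : ℝ):ℂ))
        - (∑ j, ∑ k, c j * (starRingEnd ℂ) (c k) * ((MVa lam j k : ℝ):ℂ))) := by
      rw [hE, ← Finset.sum_sub_distrib, Finset.mul_sum]
      apply Finset.sum_congr rfl; intro j _
      rw [← Finset.sum_sub_distrib, Finset.mul_sum]
      apply Finset.sum_congr rfl; intro k _
      rcases eq_or_ne j k with h | h
      · subst h
        have h0 : MVa lam j j = 0 := by simp [MVa]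
        rw [if_pos rfl, h0]
        push_cast
        ring
      · rw [if_neg h]
        have hne : lam j - lam k ≠ 0 := sub_ne_zero.mpr (fun hh => h (hinj hh))
        have haval : MVa lam j k = 1/(lam j - lam k) := by unfold MVa; rw [if_neg h]
        have hdd : d j * (starRingEnd ℂ) (d k)
            = c j * (starRingEnd ℂ) (c k)
              * Complex.exp (Complex.I * ((lam j - lam k : ℝ):ℂ) * T) := by
          rw [hd]; dsimp only
          rw [map_mul, ← Complex.exp_conj]
          rw [map_mul, map_mul, Complex.conj_I, Complex.conj_ofReal, Complex.conj_ofReal]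
          rw [mul_mul_mul_comm, ← Complex.exp_add]
          congr 2
          push_cast; ring
        rw [hdd, haval, div_eq_mul_inv, mul_inv, Complex.inv_I]
        push_cast
        ring
    have hFd := MVhilbert' lam δ hδ hinj hgap d
    have hFc := MVhilbert' lam δ hδ hinj hgap c
    have hdc : ∑ s, Complex.normSq (d s) = ∑ s, Complex.normSq (c s) := by
      apply Finset.sum_congr rfl; intro s _
      rw [hd]; dsimp only
      rw [Complex.normSq_mul]
      have h9 : Complex.normSq (Complex.exp (Complex.I * lam s * T)) = 1 := by
        rw [Complex.normSq_eq_norm_sq, Complex.norm_exp]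
        have hre0 : (Complex.I * (lam s : ℂ) * (T:ℂ)).re = 0 := by
          simp [Complex.mul_re, Complex.mul_im]
        rw [hre0, Real.exp_zero]; norm_num
      rw [h9, mul_one]
    have hcC : ∑ s, Complex.normSq (c s) = Cs := by
      rw [hCs]
      apply Finset.sum_congr rfl; intro s _
      rw [Complex.normSq_eq_norm_sq]
    rw [hEeq, norm_mul]
    have h10 : ‖-Complex.I‖ = 1 := by rw [norm_neg, Complex.norm_I]
    rw [h10, one_mul]
    calc ‖(∑ j, ∑ k, d j * (starRingEnd ℂ) (d k) * ((MVa lam j k : ℝ):ℂ))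
          - (∑ j, ∑ k, c j * (starRingEnd ℂ) (c k) * ((MVa lam j k : ℝ):ℂ))‖
        ≤ ‖∑ j, ∑ k, d j * (starRingEnd ℂ) (d k) * ((MVa lam j k : ℝ):ℂ)‖
          + ‖∑ j, ∑ k, c j * (starRingEnd ℂ) (c k) * ((MVa lam j k : ℝ):ℂ)‖ := norm_sub_le _ _
      _ ≤ π/δ * ∑ s, Complex.normSq (d s) + π/δ * ∑ s, Complex.normSq (c s) :=
          add_le_add hFd hFc
      _ = 2 * π / δ * Cs := by rw [hdc, hcC]; ring
  -- conclude
  have hre : (∫ t in (0:ℝ)..T, ‖S t‖^2 : ℝ) = T * Cs + E.re := by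
    have := congrArg Complex.re hint
    simpa using this
  have hEre : -(2 * π / δ * Cs) ≤ E.re := by
    have h1 : |E.re| ≤ ‖E‖ := Complex.abs_re_le_norm E
    have h2 := abs_le.mp (le_trans h1 hEbound)
    linarith [h2.1]
  have main : (1 / T) * ∫ t in (0:ℝ)..T, ‖S t‖^2 ≥ (1 - 2 * π / (T * δ)) * Cs := by
    rw [hre]
    have h5 : T * Cs + E.re ≥ T * Cs - 2 * π / δ * Cs := by linarith
    have h6 : (1/T) * (T * Cs + E.re) ≥ (1/T) * (T * Cs - 2 * π / δ * Cs) := by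
      apply mul_le_mul_of_nonneg_left h5 (by positivity)
    have h7 : (1/T) * (T * Cs - 2 * π / δ * Cs) = (1 - 2 * π / (T * δ)) * Cs := by
      field_simp
    linarith [h6, h7.symm.le]
  constructor
  · exact main
  · intro hT4
    have hTδ : T * δ > 4 * π := by
      rw [gt_iff_lt, div_lt_iff₀ hδ] at hT4
      linarith
    have h8 : 2 * π / (T * δ) ≤ 1/2 := by
      rw [div_le_iff₀ (by linarith)]
      linarith
    calc (1/2) * Cs ≤ (1 - 2 * π / (T * δ)) * Cs := by
          apply mul_le_mul_of_nonneg_right _ hCs0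
          linarith
      _ ≤ (1 / T) * ∫ t in (0:ℝ)..T, ‖S t‖^2 := main
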